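/- Suppose a graph G contains the cycle (u_1, u_2, ..., u_{n-1}, u_1) of length n-1 but no cycle of length n, and let Y = V(G) \ {u_1, ..., u_{n-1}}. Suppose the independence number of G equals m-1, where m ≤ (n+2)/2, and {x_1, x_2, ..., x_{m-1}} ⊆ Y is an independent set of m-1 vertices. Then no member of this set is adjacent to m-2 or more vertices on the cycle. -/

import Mathlib

open SimpleGraph

/-- `G` contains a cycle of length `n` (as a subgraph). -/
def HasCycleOfLength {V : Type*} (G : SimpleGraph V) (n : ℕ) : Prop :=
  ∃ (v : V) (w : G.Walk v v), w.IsCycle ∧ w.length = n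

section Aux
variable {V : Type*} {c : ℕ} {G : SimpleGraph V} {u : ZMod c → V}

private lemma natCast_inj_lt [NeZero c] {t₁ t₂ : ℕ} (h1 : t₁ < c) (h2 : t₂ < c)
    (h : (t₁ : ZMod c) = t₂) : t₁ = t₂ := by
  have e1 := ZMod.val_cast_of_lt h1
  have e2 := ZMod.val_cast_of_lt h2
  rw [h] at e1; omega

private lemma valCast [NeZero c] (z : ZMod c) : ((z.val : ℕ) : ZMod c) = z :=
  ZMod.natCast_rightInverse z

def arcWalk (hc : ∀ i : ZMod c, G.Adj (u i) (u (i+1))) : (a : ZMod c) → (s : ℕ) →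
    G.Walk (u a) (u (a + s))
  | a, 0 => Walk.nil.copy rfl (by norm_num)
  | a, s+1 => (Walk.cons (hc a) (arcWalk hc (a+1) s)).copy rfl (by push_cast; ring_nf)

lemma length_arcWalk (hc : ∀ i : ZMod c, G.Adj (u i) (u (i+1))) (a : ZMod c) (s : ℕ) :
    (arcWalk hc a s).length = s := by
  induction s generalizing a with
  | zero => simp [arcWalk]
  | succ s ih => simp [arcWalk, ih]

lemma support_arcWalk (hc : ∀ i : ZMod c, G.Adj (u i) (u (i+1))) (a : ZMod c) (s : ℕ) :
    (arcWalk hc a s).support = (List.range (s+1)).map (fun t : ℕ => u (a + (t : ZMod c))) := by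
  induction s generalizing a with
  | zero =>
      have : List.range 1 = [0] := by simp [List.range_succ]
      rw [this]
      simp only [arcWalk, Walk.support_copy, Walk.support_nil, List.map_cons, List.map_nil]
      norm_num
  | succ s ih =>
      have h1 : (arcWalk hc a (s+1)).support = u a :: (arcWalk hc (a+1) s).support := by
        simp [arcWalk]
      rw [h1, ih]
      conv_rhs => rw [List.range_succ_eq_map, List.map_cons, List.map_map]
      refine congrArg₂ _ ?_ ?_
      · norm_num
      · refine List.map_congr_left fun t _ => ?_
        show u (a + 1 + (t:ZMod c)) = u (a + ((t+1 : ℕ) : ZMod c))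
        push_cast; ring_nf

lemma mem_support_arcWalk (hc : ∀ i : ZMod c, G.Adj (u i) (u (i+1))) {a : ZMod c} {s : ℕ}
    {v : V} (hv : v ∈ (arcWalk hc a s).support) : ∃ t : ℕ, t ≤ s ∧ v = u (a + (t : ZMod c)) := by
  rw [support_arcWalk] at hv
  obtain ⟨t, ht, rfl⟩ := List.mem_map.mp hv
  have := List.mem_range.mp ht
  exact ⟨t, by omega, rfl⟩

lemma nodup_support_arcWalk [NeZero c] (hc : ∀ i : ZMod c, G.Adj (u i) (u (i+1)))
    (hu : Function.Injective u) (a : ZMod c) {s : ℕ} (hs : s < c) :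
    (arcWalk hc a s).support.Nodup := by
  rw [support_arcWalk]
  refine List.Nodup.map_on ?_ List.nodup_range
  intro t1 h1 t2 h2 he
  have h1' := List.mem_range.mp h1
  have h2' := List.mem_range.mp h2
  exact natCast_inj_lt (by omega) (by omega) (add_left_cancel (hu he))

lemma natCast_pred [NeZero c] (hc1 : 1 ≤ c) : ((c - 1 : ℕ) : ZMod c) = -1 := by
  have h0 : ((c : ℕ) : ZMod c) = 0 := ZMod.natCast_self c
  rw [Nat.cast_sub hc1, h0, Nat.cast_one, zero_sub]

lemma cycleC0 [NeZero c] (hc3 : 3 ≤ c)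
    (hu : Function.Injective u) (hc : ∀ i : ZMod c, G.Adj (u i) (u (i+1)))
    {xx : V} (hx : xx ∉ Set.range u) {i : ZMod c}
    (h1 : G.Adj xx (u i)) (h2 : G.Adj xx (u (i+1))) : HasCycleOfLength G (c+1) := by
  haveI : Fact (1 < c) := ⟨by omega⟩
  have hend : (i + 1) + ((c - 1 : ℕ) : ZMod c) = i := by
    rw [natCast_pred (by omega)]; ring
  let q : G.Walk (u (i+1)) (u i) :=
    (arcWalk hc (i+1) (c-1)).copy rfl (congrArg u hend)
  let p : G.Walk (u (i+1)) xx := q.concat h1.symm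
  have hqsup : q.support = (arcWalk hc (i+1) (c-1)).support := Walk.support_copy _ _ _
  have hpsup : p.support = q.support ++ [xx] := by
    rw [Walk.support_concat]
  have hxq : xx ∉ q.support := by
    rw [hqsup]
    intro hmem
    obtain ⟨t, _, ht⟩ := mem_support_arcWalk hc hmem
    exact hx ⟨_, ht.symm⟩
  have hpath : p.IsPath := by
    rw [Walk.isPath_def, hpsup, List.nodup_append]
    refine ⟨?_, List.nodup_singleton _, ?_⟩
    · rw [hqsup]; exact nodup_support_arcWalk hc hu _ (by omega)
    · intro a ha b hb hab
      simp only [List.mem_singleton] at hb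
      rw [hab, hb] at ha
      exact hxq ha
  have hedge : s(xx, u (i+1)) ∉ p.edges := by
    rw [show p.edges = q.edges ++ [s(u i, xx)] by
      rw [Walk.edges_concat, List.concat_eq_append]]
    intro hmem
    rcases List.mem_append.mp hmem with hq | hlast
    · exact hxq (Walk.fst_mem_support_of_mem_edges q hq)
    · simp only [List.mem_singleton, Sym2.eq_iff] at hlast
      rcases hlast with ⟨hxi, _⟩ | ⟨_, hii⟩
      · exact hx ⟨_, hxi.symm⟩
      · have := hu hii
        rw [add_eq_left] at this
        exact (one_ne_zero : (1 : ZMod c) ≠ 0) this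
  refine ⟨xx, Walk.cons h2 p, (Walk.cons_isCycle_iff p h2).mpr ⟨hpath, hedge⟩, ?_⟩
  have : p.length = (c-1) + 1 := by
    rw [Walk.length_concat]
    congr 1
    rw [Walk.length_copy, length_arcWalk]
  rw [Walk.length_cons, this]
  omega


lemma val_le_of_ne_neg_one [NeZero c] {z : ZMod c} (hz : z ≠ -1) : z.val ≤ c - 2 := by
  have h1 : z.val < c := ZMod.val_lt z
  by_contra h
  have h2 : z.val = c - 1 := by omega
  apply hz
  rw [← valCast z, h2, natCast_pred (by have := NeZero.pos c; omega)]

lemma val_sum_eq [NeZero c] {d : ℕ} (hd : d < c) (hd2 : 2 * (c - 2) < c + d)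
    {z w : ZMod c} (hzw : z + w = (d : ℕ)) (hz : z ≠ -1) (hw : w ≠ -1) :
    z.val + w.val = d := by
  have h1 : (z + w).val = (z.val + w.val) % c := ZMod.val_add z w
  rw [hzw, ZMod.val_cast_of_lt hd] at h1
  have h2 := val_le_of_ne_neg_one hz
  have h3 := val_le_of_ne_neg_one hw
  rcases Nat.lt_or_ge (z.val + w.val) c with h | h
  · rw [Nat.mod_eq_of_lt h] at h1; omega
  · rw [Nat.mod_eq_sub_mod h, Nat.mod_eq_of_lt (by omega)] at h1; omega

lemma cycleC1 [NeZero c] (hc3 : 3 ≤ c)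
    (hu : Function.Injective u) (hc : ∀ i : ZMod c, G.Adj (u i) (u (i+1)))
    {xx : V} (hx : xx ∉ Set.range u) {a b : ZMod c} (hab : a ≠ b)
    (hxa : G.Adj xx (u a)) (hxb : G.Adj xx (u b))
    (hchord : G.Adj (u (a+1)) (u (b+1))) : HasCycleOfLength G (c+1) := by
  set s1 := (a - b - 1).val with hs1
  set s2 := (b - a - 1).val with hs2
  have hzne : a - b - 1 ≠ -1 := by
    intro h
    exact hab (sub_eq_zero.mp (by linear_combination h))
  have hwne : b - a - 1 ≠ -1 := by
    intro h
    exact hab (sub_eq_zero.mp (by linear_combination h)).symm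
  have hsum : s1 + s2 = c - 2 := by
    refine val_sum_eq (by omega) (by omega) ?_ hzne hwne
    have : ((c - 2 : ℕ) : ZMod c) = (c : ℕ) - 2 := by
      push_cast [Nat.cast_sub (by omega : 2 ≤ c)]; ring
    rw [this, ZMod.natCast_self]
    ring
  have hs1c : s1 ≤ c - 2 := val_le_of_ne_neg_one hzne
  have hs2c : s2 ≤ c - 2 := val_le_of_ne_neg_one hwne
  -- endpoints
  have he1 : b + 1 + ((s1 : ℕ) : ZMod c) = a := by
    rw [hs1, valCast]; ring
  have he2 : a + 1 + ((s2 : ℕ) : ZMod c) = b := by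
    rw [hs2, valCast]; ring
  have hshift : a + 1 = b + 1 + (((s1 + 1 : ℕ)) : ZMod c) := by
    push_cast
    rw [hs1, valCast]; ring
  let q1 : G.Walk (u a) (u (b+1)) :=
    ((arcWalk hc (b+1) s1).copy rfl (congrArg u he1)).reverse
  let q2 : G.Walk (u (a+1)) (u b) :=
    (arcWalk hc (a+1) s2).copy rfl (congrArg u he2)
  have hq1sup : q1.support = (arcWalk hc (b+1) s1).support.reverse := by
    simp only [q1, Walk.support_reverse, Walk.support_copy]
  have hq2sup : q2.support = (arcWalk hc (a+1) s2).support := Walk.support_copy _ _ _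
  have hq1mem : ∀ v ∈ q1.support, ∃ t : ℕ, t ≤ s1 ∧ v = u (b + 1 + (t : ZMod c)) := by
    intro v hv
    rw [hq1sup, List.mem_reverse] at hv
    exact mem_support_arcWalk hc hv
  have hq2mem : ∀ v ∈ q2.support, ∃ t : ℕ, t ≤ s2 ∧ v = u (a + 1 + (t : ZMod c)) := by
    intro v hv
    rw [hq2sup] at hv
    exact mem_support_arcWalk hc hv
  have hxq1 : xx ∉ q1.support := fun hm => by
    obtain ⟨t, _, ht⟩ := hq1mem _ hm; exact hx ⟨_, ht.symm⟩
  have hxq2 : xx ∉ q2.support := fun hm => by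
    obtain ⟨t, _, ht⟩ := hq2mem _ hm; exact hx ⟨_, ht.symm⟩
  have hdisj : ∀ v ∈ q1.support, v ∉ q2.support := by
    intro v hv1 hv2
    obtain ⟨t1, ht1, rfl⟩ := hq1mem _ hv1
    obtain ⟨t2, ht2, he⟩ := hq2mem _ hv2
    rw [hshift] at he
    have he2' := hu he
    have hcast : ((t1 : ℕ) : ZMod c) = (((s1 + 1 + t2 : ℕ)) : ZMod c) := by
      push_cast at he2' ⊢
      linear_combination he2'
    have := natCast_inj_lt (t₁ := t1) (t₂ := s1 + 1 + t2) (by omega) (by omega) hcast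
    omega
  let p : G.Walk (u a) xx := q1.append (Walk.cons hchord.symm (q2.concat hxb.symm))
  have hpsup : p.support = q1.support ++ (q2.support ++ [xx]) := by
    simp only [p, Walk.support_append, Walk.support_cons, List.tail_cons, Walk.support_concat,
      List.concat_eq_append]
  have hpath : p.IsPath := by
    rw [Walk.isPath_def, hpsup, List.nodup_append]
    refine ⟨?_, ?_, ?_⟩
    · rw [hq1sup]
      exact (List.nodup_reverse).mpr (nodup_support_arcWalk hc hu _ (by omega))
    · rw [List.nodup_append]
      refine ⟨?_, List.nodup_singleton _, ?_⟩
      · rw [hq2sup]; exact nodup_support_arcWalk hc hu _ (by omega)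
      · intro v hv w hw hvw
        simp only [List.mem_singleton] at hw
        rw [hvw, hw] at hv
        exact hxq2 hv
    · intro v hv1 w hv2 hvw
      rw [← hvw] at hv2
      rcases List.mem_append.mp hv2 with h2 | h2
      · exact hdisj v hv1 h2
      · simp only [List.mem_singleton] at h2
        exact hxq1 (h2 ▸ hv1)
  have hpedges : p.edges = q1.edges ++ (s(u (b+1), u (a+1)) :: (q2.edges ++ [s(u b, xx)])) := by
    simp only [p, Walk.edges_append, Walk.edges_cons, Walk.edges_concat, List.concat_eq_append]
  have hedge : s(xx, u a) ∉ p.edges := by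
    rw [hpedges]
    intro hmem
    rcases List.mem_append.mp hmem with hq | hrest
    · exact hxq1 (Walk.fst_mem_support_of_mem_edges q1 hq)
    · rcases List.mem_cons.mp hrest with hch | hrest2
      · rw [Sym2.eq_iff] at hch
        rcases hch with ⟨h1, _⟩ | ⟨h1, _⟩
        · exact hx ⟨_, h1.symm⟩
        · exact hx ⟨_, h1.symm⟩
      · rcases List.mem_append.mp hrest2 with hq | hlast
        · exact hxq2 (Walk.fst_mem_support_of_mem_edges q2 hq)
        · simp only [List.mem_singleton, Sym2.eq_iff] at hlast
          rcases hlast with ⟨h1, _⟩ | ⟨_, h2⟩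
          · exact hx ⟨_, h1.symm⟩
          · exact hab (hu h2)
  refine ⟨xx, Walk.cons hxa p, (Walk.cons_isCycle_iff p hxa).mpr ⟨hpath, hedge⟩, ?_⟩
  have hlen : p.length = s1 + (1 + (s2 + 1)) := by
    simp only [p, q1, q2, Walk.length_append, Walk.length_cons, Walk.length_concat,
      Walk.length_reverse, Walk.length_copy, length_arcWalk]
    ring
  rw [Walk.length_cons, hlen]
  omega


lemma cycleC2 [NeZero c] (hc3 : 3 ≤ c)
    (hu : Function.Injective u) (hc : ∀ i : ZMod c, G.Adj (u i) (u (i+1)))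
    {xx yy : V} (hx : xx ∉ Set.range u) (hy : yy ∉ Set.range u) (hxy : xx ≠ yy)
    {a b : ZMod c} (hab : a ≠ b) (hba : b ≠ a + 1)
    (hxa : G.Adj xx (u a)) (hxb : G.Adj xx (u b))
    (hy1 : G.Adj yy (u (a+2))) (hy2 : G.Adj yy (u (b+1))) : HasCycleOfLength G (c+1) := by
  set s1 := (a - b - 1).val with hs1
  set s2 := (b - a - 2).val with hs2
  have hzne : a - b - 1 ≠ -1 := by
    intro h
    exact hab (sub_eq_zero.mp (by linear_combination h))
  have hwne : b - a - 2 ≠ -1 := by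
    intro h
    apply hba
    linear_combination h
  have hsum : s1 + s2 = c - 3 := by
    refine val_sum_eq (by omega) (by omega) ?_ hzne hwne
    have : ((c - 3 : ℕ) : ZMod c) = (c : ℕ) - 3 := by
      push_cast [Nat.cast_sub (by omega : 3 ≤ c)]; ring
    rw [this, ZMod.natCast_self]
    ring
  have hs1c : s1 ≤ c - 2 := val_le_of_ne_neg_one hzne
  have hs2c : s2 ≤ c - 2 := val_le_of_ne_neg_one hwne
  have he1 : b + 1 + ((s1 : ℕ) : ZMod c) = a := by
    rw [hs1, valCast]; ring
  have he2 : a + 2 + ((s2 : ℕ) : ZMod c) = b := by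
    rw [hs2, valCast]; ring
  have hshift : a + 2 = b + 1 + (((s1 + 2 : ℕ)) : ZMod c) := by
    push_cast
    rw [hs1, valCast]; ring
  let q1 : G.Walk (u a) (u (b+1)) :=
    ((arcWalk hc (b+1) s1).copy rfl (congrArg u he1)).reverse
  let q2 : G.Walk (u (a+2)) (u b) :=
    (arcWalk hc (a+2) s2).copy rfl (congrArg u he2)
  have hq1sup : q1.support = (arcWalk hc (b+1) s1).support.reverse := by
    simp only [q1, Walk.support_reverse, Walk.support_copy]
  have hq2sup : q2.support = (arcWalk hc (a+2) s2).support := Walk.support_copy _ _ _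
  have hq1mem : ∀ v ∈ q1.support, ∃ t : ℕ, t ≤ s1 ∧ v = u (b + 1 + (t : ZMod c)) := by
    intro v hv
    rw [hq1sup, List.mem_reverse] at hv
    exact mem_support_arcWalk hc hv
  have hq2mem : ∀ v ∈ q2.support, ∃ t : ℕ, t ≤ s2 ∧ v = u (a + 2 + (t : ZMod c)) := by
    intro v hv
    rw [hq2sup] at hv
    exact mem_support_arcWalk hc hv
  have hxq1 : xx ∉ q1.support := fun hm => by
    obtain ⟨t, _, ht⟩ := hq1mem _ hm; exact hx ⟨_, ht.symm⟩
  have hxq2 : xx ∉ q2.support := fun hm => by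
    obtain ⟨t, _, ht⟩ := hq2mem _ hm; exact hx ⟨_, ht.symm⟩
  have hyq1 : yy ∉ q1.support := fun hm => by
    obtain ⟨t, _, ht⟩ := hq1mem _ hm; exact hy ⟨_, ht.symm⟩
  have hyq2 : yy ∉ q2.support := fun hm => by
    obtain ⟨t, _, ht⟩ := hq2mem _ hm; exact hy ⟨_, ht.symm⟩
  have hdisj : ∀ v ∈ q1.support, v ∉ q2.support := by
    intro v hv1 hv2
    obtain ⟨t1, ht1, rfl⟩ := hq1mem _ hv1
    obtain ⟨t2, ht2, he⟩ := hq2mem _ hv2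
    rw [hshift] at he
    have he2' := hu he
    have hcast : ((t1 : ℕ) : ZMod c) = (((s1 + 2 + t2 : ℕ)) : ZMod c) := by
      push_cast at he2' ⊢
      linear_combination he2'
    have := natCast_inj_lt (t₁ := t1) (t₂ := s1 + 2 + t2) (by omega) (by omega) hcast
    omega
  let p : G.Walk (u a) xx :=
    q1.append (Walk.cons hy2.symm (Walk.cons hy1 (q2.concat hxb.symm)))
  have hpsup : p.support = q1.support ++ (yy :: (q2.support ++ [xx])) := by
    simp only [p, Walk.support_append, Walk.support_cons, List.tail_cons, Walk.support_concat,
      List.concat_eq_append]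
  have hpath : p.IsPath := by
    rw [Walk.isPath_def, hpsup, List.nodup_append]
    refine ⟨?_, ?_, ?_⟩
    · rw [hq1sup]
      exact (List.nodup_reverse).mpr (nodup_support_arcWalk hc hu _ (by omega))
    · rw [List.nodup_cons, List.nodup_append]
      refine ⟨?_, ?_, List.nodup_singleton _, ?_⟩
      · intro hyin
        rcases List.mem_append.mp hyin with h2 | h2
        · exact hyq2 h2
        · simp only [List.mem_singleton] at h2
          exact hxy h2.symm
      · rw [hq2sup]; exact nodup_support_arcWalk hc hu _ (by omega)
      · intro v hv w hw hvw
        simp only [List.mem_singleton] at hw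
        rw [hvw, hw] at hv
        exact hxq2 hv
    · intro v hv1 w hv2 hvw
      rw [← hvw] at hv2
      rcases List.mem_cons.mp hv2 with h2 | h2
      · exact hyq1 (h2 ▸ hv1)
      rcases List.mem_append.mp h2 with h3 | h3
      · exact hdisj v hv1 h3
      · simp only [List.mem_singleton] at h3
        exact hxq1 (h3 ▸ hv1)
  have hpedges : p.edges =
      q1.edges ++ (s(u (b+1), yy) :: s(yy, u (a+2)) :: (q2.edges ++ [s(u b, xx)])) := by
    simp only [p, Walk.edges_append, Walk.edges_cons, Walk.edges_concat, List.concat_eq_append]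
  have hedge : s(xx, u a) ∉ p.edges := by
    rw [hpedges]
    intro hmem
    rcases List.mem_append.mp hmem with hq | hrest
    · exact hxq1 (Walk.fst_mem_support_of_mem_edges q1 hq)
    rcases List.mem_cons.mp hrest with hch | hrest2
    · rw [Sym2.eq_iff] at hch
      rcases hch with ⟨h1, _⟩ | ⟨h1, _⟩
      · exact hx ⟨_, h1.symm⟩
      · exact hxy h1
    rcases List.mem_cons.mp hrest2 with hch | hrest3
    · rw [Sym2.eq_iff] at hch
      rcases hch with ⟨h1, _⟩ | ⟨h1, _⟩
      · exact hxy h1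
      · exact hx ⟨_, h1.symm⟩
    rcases List.mem_append.mp hrest3 with hq | hlast
    · exact hxq2 (Walk.fst_mem_support_of_mem_edges q2 hq)
    · simp only [List.mem_singleton, Sym2.eq_iff] at hlast
      rcases hlast with ⟨h1, _⟩ | ⟨_, h2⟩
      · exact hx ⟨_, h1.symm⟩
      · exact hab (hu h2)
  refine ⟨xx, Walk.cons hxa p, (Walk.cons_isCycle_iff p hxa).mpr ⟨hpath, hedge⟩, ?_⟩
  have hlen : p.length = s1 + (1 + (1 + (s2 + 1))) := by
    simp only [p, q1, q2, Walk.length_append, Walk.length_cons, Walk.length_concat,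
      Walk.length_reverse, Walk.length_copy, length_arcWalk]
    ring
  rw [Walk.length_cons, hlen]
  omega

end Aux

/-- Suppose `G` contains the cycle `(u_1, u_2, …, u_{n-1}, u_1)` of length `n-1`
(here encoded by an injective map `u : ZMod (n-1) → V` with consecutive vertices
adjacent) but no cycle of length `n`.  Suppose the independence number of `G` equals
`m-1`, where `m ≤ (n+2)/2`, and `{x_1, …, x_{m-1}}` is an independent set of `m-1`
vertices outside the cycle.  Then no member of this set is adjacent to `m-2` or more
vertices on the cycle. -/
theorem indepSet_few_neighbors_on_cycle (n m : ℕ) (hn : 4 ≤ n) (hm : 2 * m ≤ n + 2)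
    {V : Type*} (G : SimpleGraph V)
    (u : ZMod (n - 1) → V) (hu : Function.Injective u)
    (hcyc : ∀ i : ZMod (n - 1), G.Adj (u i) (u (i + 1)))
    (hno : ¬ HasCycleOfLength G n)
    (hα_le : ∀ s : Finset V, (s : Set V).Pairwise (fun a b => ¬ G.Adj a b) → s.card ≤ m - 1)
    (hα_eq : ∃ s : Finset V, s.card = m - 1 ∧
      (s : Set V).Pairwise (fun a b => ¬ G.Adj a b))
    (x : Fin (m - 1) → V) (hxinj : Function.Injective x)
    (hxY : ∀ k, x k ∉ Set.range u)
    (hxind : ∀ k l, k ≠ l → ¬ G.Adj (x k) (x l)) :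
    ∀ k, ({v | v ∈ Set.range u ∧ G.Adj (x k) v}).ncard < m - 2 := by
  classical
  haveI : NeZero (n - 1) := ⟨by omega⟩
  have hc3 : 3 ≤ n - 1 := by omega
  have hcn : (n - 1) + 1 = n := by omega
  have hC0 : ∀ w : V, w ∉ Set.range u → ∀ i : ZMod (n - 1),
      G.Adj w (u i) → G.Adj w (u (i + 1)) → False := by
    intro w hw i h1 h2
    exact hno (hcn ▸ cycleC0 hc3 hu hcyc hw h1 h2)
  intro k
  by_contra hcon
  push_neg at hcon
  rcases Nat.lt_or_ge m 3 with hm3 | hm3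
  · rcases Nat.lt_or_ge m 2 with hm2 | hm2
    · have := k.isLt; omega
    · have hall : ∀ i : ZMod (n - 1), G.Adj (x k) (u i) := by
        intro i
        by_contra hna
        have hxne : x k ≠ u i := fun h => hxY k ⟨i, h.symm⟩
        have hp : (({x k, u i} : Finset V) : Set V).Pairwise (fun a b => ¬ G.Adj a b) := by
          intro p hp q hq hpq
          simp only [Finset.coe_insert, Finset.coe_singleton, Set.mem_insert_iff,
            Set.mem_singleton_iff] at hp hq
          rcases hp with rfl | rfl <;> rcases hq with rfl | rfl
          · exact absurd rfl hpq
          · exact hna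
          · exact fun h => hna h.symm
          · exact absurd rfl hpq
        have := hα_le _ hp
        rw [Finset.card_insert_of_notMem (by simp [hxne]), Finset.card_singleton] at this
        omega
      exact hC0 (x k) (hxY k) 0 (hall 0) (hall (0 + 1))
  -- m ≥ 3
  set A : Set (ZMod (n - 1)) := {i | G.Adj (x k) (u i)} with hA
  have himg : {v | v ∈ Set.range u ∧ G.Adj (x k) v} = u '' A := by
    ext v
    constructor
    · rintro ⟨⟨i, rfl⟩, hadj⟩
      exact ⟨i, hadj, rfl⟩
    · rintro ⟨i, hadj, rfl⟩
      exact ⟨⟨i, rfl⟩, hadj⟩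
  rw [himg, Set.ncard_image_of_injective _ hu] at hcon
  have hAfin : A.Finite := Set.toFinite A
  set T : Finset (ZMod (n - 1)) := hAfin.toFinset with hT
  have hmemT : ∀ i, i ∈ T ↔ G.Adj (x k) (u i) := by
    intro i
    rw [hT, Set.Finite.mem_toFinset]
    rfl
  have hTcard : A.ncard = T.card := by
    rw [hT]
    exact Set.ncard_eq_toFinset_card _ hAfin
  rw [hTcard] at hcon
  have hnc : ∀ i ∈ T, i + 1 ∉ T := fun i hi hi1 =>
    hC0 (x k) (hxY k) i ((hmemT i).mp hi) ((hmemT _).mp hi1)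
  have hfinj : Function.Injective (fun i : ZMod (n - 1) => u (i + 1)) := by
    intro i j h
    have := hu h
    exact add_right_cancel this
  have hxkσ : ∀ i ∈ T, ¬ G.Adj (x k) (u (i + 1)) := fun i hi hadj =>
    hC0 (x k) (hxY k) i ((hmemT i).mp hi) hadj
  have hσσ : ∀ i ∈ T, ∀ j ∈ T, i ≠ j → ¬ G.Adj (u (i + 1)) (u (j + 1)) := by
    intro i hi j hj hij hadj
    exact hno (hcn ▸ cycleC1 hc3 hu hcyc (hxY k) hij
      ((hmemT i).mp hi) ((hmemT j).mp hj) hadj)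
  have hxknot : x k ∉ T.image (fun i => u (i + 1)) := by
    simp only [Finset.mem_image]
    rintro ⟨i, _, hl⟩
    exact hxY k ⟨i + 1, hl⟩
  have hTle : T.card ≤ m - 2 := by
    have hp : ((insert (x k) (T.image (fun i => u (i + 1))) : Finset V) : Set V).Pairwise
        (fun a b => ¬ G.Adj a b) := by
      intro p hp q hq hpq
      simp only [Finset.coe_insert, Set.mem_insert_iff, Finset.coe_image, Set.mem_image,
        Finset.mem_coe] at hp hq
      rcases hp with rfl | ⟨i, hi, rfl⟩ <;> rcases hq with rfl | ⟨j, hj, rfl⟩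
      · exact absurd rfl hpq
      · exact hxkσ j hj
      · exact fun h => hxkσ i hi h.symm
      · exact hσσ i hi j hj (fun hij => hpq (by rw [hij]))
    have hcard := hα_le _ hp
    rw [Finset.card_insert_of_notMem hxknot, Finset.card_image_of_injective _ hfinj] at hcard
    omega
  have hTeq : T.card = m - 2 := le_antisymm hTle hcon
  -- pigeonhole: find a₀
  obtain ⟨a₀, ha₀, ha₁, ha₂⟩ : ∃ a ∈ T, a + 1 ∉ T ∧ a + 2 ∉ T := by
    by_contra hno2
    push_neg at hno2
    have hstep : ∀ a ∈ T, a + 2 ∈ T := fun a ha => hno2 a ha (hnc a ha)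
    have hTne : T.Nonempty := Finset.card_pos.mp (by omega)
    obtain ⟨b₀, hb₀⟩ := hTne
    have horb : ∀ j : ℕ, b₀ + 2 * (j : ZMod (n - 1)) ∈ T := by
      intro j
      induction j with
      | zero => simpa using hb₀
      | succ j ih =>
          have h2 := hstep _ ih
          have heq : b₀ + 2 * ((j + 1 : ℕ) : ZMod (n - 1))
              = b₀ + 2 * ((j : ℕ) : ZMod (n - 1)) + 2 := by push_cast; ring
          rw [heq]
          exact h2
    have hinj : Set.InjOn (fun j : ℕ => b₀ + 2 * (j : ZMod (n - 1)))
        ↑(Finset.range (m - 1)) := by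
      intro j1 hj1 j2 hj2 he
      simp only [Finset.coe_range, Set.mem_Iio] at hj1 hj2
      have h2 : ((2 * j1 : ℕ) : ZMod (n - 1)) = ((2 * j2 : ℕ) : ZMod (n - 1)) := by
        push_cast
        have := add_left_cancel he
        linear_combination this
      have := natCast_inj_lt (by omega) (by omega) h2
      omega
    have hsub : (Finset.range (m - 1)).image (fun j : ℕ => b₀ + 2 * (j : ZMod (n - 1))) ⊆ T := by
      intro v hv
      simp only [Finset.mem_image] at hv
      obtain ⟨j, _, rfl⟩ := hv
      exact horb j
    have hle := Finset.card_le_card hsub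
    rw [Finset.card_image_of_injOn hinj, Finset.card_range] at hle
    omega
  by_cases hz : ∃ l, G.Adj (x l) (u (a₀ + 2))
  · obtain ⟨l, hl⟩ := hz
    have hlk : l ≠ k := by
      intro h
      rw [h] at hl
      exact ha₂ ((hmemT _).mpr hl)
    have hxkxl : x k ≠ x l := fun h => hlk (hxinj h.symm)
    have hlσ : ∀ i ∈ T, ¬ G.Adj (x l) (u (i + 1)) := by
      intro i hi hadj
      by_cases hia : i = a₀
      · subst hia
        exact hC0 (x l) (hxY l) (i + 1) hadj
          (by rw [show i + 1 + 1 = i + 2 by ring]; exact hl)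
      · have hba : i ≠ a₀ + 1 := fun h => ha₁ (h ▸ hi)
        exact hno (hcn ▸ cycleC2 hc3 hu hcyc (hxY k) (hxY l) hxkxl
          (fun h => hia h.symm) hba ((hmemT _).mp ha₀) ((hmemT _).mp hi) hl hadj)
    have hp : ((insert (x k) (insert (x l) (T.image (fun i => u (i + 1)))) : Finset V) :
        Set V).Pairwise (fun a b => ¬ G.Adj a b) := by
      intro p hp q hq hpq
      simp only [Finset.coe_insert, Set.mem_insert_iff, Finset.coe_image, Set.mem_image,
        Finset.mem_coe] at hp hq
      rcases hp with rfl | rfl | ⟨i, hi, rfl⟩ <;> rcases hq with rfl | rfl | ⟨j, hj, rfl⟩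
      · exact absurd rfl hpq
      · exact hxind k l (fun h => hlk h.symm)
      · exact hxkσ j hj
      · exact fun h => hxind k l (fun h2 => hlk h2.symm) h.symm
      · exact absurd rfl hpq
      · exact hlσ j hj
      · exact fun h => hxkσ i hi h.symm
      · exact fun h => hlσ i hi h.symm
      · exact hσσ i hi j hj (fun hij => hpq (by rw [hij]))
    have hxlnot : x l ∉ T.image (fun i => u (i + 1)) := by
      simp only [Finset.mem_image]
      rintro ⟨i, _, hl2⟩
      exact hxY l ⟨i + 1, hl2⟩
    have hcard := hα_le _ hp
    rw [Finset.card_insert_of_notMem (by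
        simp only [Finset.mem_insert]
        rintro (h | h)
        · exact hxkxl h
        · exact hxknot h ),
      Finset.card_insert_of_notMem hxlnot,
      Finset.card_image_of_injective _ hfinj, hTeq] at hcard
    omega
  · push_neg at hz
    have hp : ((insert (u (a₀ + 2)) (Finset.univ.image x) : Finset V) : Set V).Pairwise
        (fun a b => ¬ G.Adj a b) := by
      intro p hp q hq hpq
      simp only [Finset.coe_insert, Set.mem_insert_iff, Finset.coe_image, Finset.coe_univ,
        Set.image_univ, Set.mem_range] at hp hq
      rcases hp with rfl | ⟨i, rfl⟩ <;> rcases hq with rfl | ⟨j, rfl⟩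
      · exact absurd rfl hpq
      · exact fun h => hz j h.symm
      · exact hz i
      · exact hxind i j (fun hij => hpq (by rw [hij]))
    have hcard := hα_le _ hp
    rw [Finset.card_insert_of_notMem (by
        simp only [Finset.mem_image, Finset.mem_univ, true_and]
        rintro ⟨l, hl⟩
        exact hxY l ⟨a₀ + 2, hl.symm⟩),
      Finset.card_image_of_injective _ hxinj, Finset.card_univ, Fintype.card_fin] at hcard
    omega
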